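/- Let ω₁ < 0 < ω₂ be real numbers and let n₁, n₂ be integers, not both zero. Then there exists λ ∈ ℝ such that the quadratic form on ℝ² × ℝ² given by (w₁, w₂) ↦ (1/2)((ω₁ + λn₁)‖w₁‖² + (ω₂ + λn₂)‖w₂‖²) is definite (positive definite or negative definite) if and only if ω₁n₂ − ω₂n₁ ≠ 0. -/

import Mathlib

/-- If the determinant `ω₁ r₂ - ω₂ r₁` is nonzero, there is `l` making both
coefficients strictly of the same sign. -/
lemma exists_l_aux (ω₁ ω₂ r₁ r₂ : ℝ) (hω₁ : ω₁ < 0) (hω₂ : 0 < ω₂)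
    (hdet : ω₁ * r₂ - ω₂ * r₁ ≠ 0) :
    ∃ l : ℝ, (0 < ω₁ + l * r₁ ∧ 0 < ω₂ + l * r₂) ∨
      (ω₁ + l * r₁ < 0 ∧ ω₂ + l * r₂ < 0) := by
  rcases lt_trichotomy r₁ 0 with hr₁ | hr₁ | hr₁ <;>
    rcases lt_trichotomy r₂ 0 with hr₂ | hr₂ | hr₂
  · -- r₁ < 0, r₂ < 0
    refine ⟨min ((1 - ω₁) / r₁) ((1 - ω₂) / r₂), Or.inl ⟨?_, ?_⟩⟩
    · have h := mul_le_mul_of_nonpos_right (min_le_left ((1 - ω₁) / r₁) ((1 - ω₂) / r₂))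
        (le_of_lt hr₁)
      rw [div_mul_cancel₀ _ (ne_of_lt hr₁)] at h
      linarith
    · have h := mul_le_mul_of_nonpos_right (min_le_right ((1 - ω₁) / r₁) ((1 - ω₂) / r₂))
        (le_of_lt hr₂)
      rw [div_mul_cancel₀ _ (ne_of_lt hr₂)] at h
      linarith
  · -- r₁ < 0, r₂ = 0
    refine ⟨(1 - ω₁) / r₁, Or.inl ⟨?_, ?_⟩⟩
    · rw [div_mul_cancel₀ _ (ne_of_lt hr₁)]; linarith
    · rw [hr₂]; linarith
  · -- r₁ < 0, r₂ > 0 : mixed signs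
    have h₁ : r₁ ≠ 0 := ne_of_lt hr₁
    have h₂ : r₂ ≠ 0 := ne_of_gt hr₂
    refine ⟨-(ω₁ / r₁ + ω₂ / r₂) / 2, ?_⟩
    have ha : (ω₁ + -(ω₁ / r₁ + ω₂ / r₂) / 2 * r₁) * (2 * r₂) = ω₁ * r₂ - ω₂ * r₁ := by
      field_simp
      ring
    have hb : (ω₂ + -(ω₁ / r₁ + ω₂ / r₂) / 2 * r₂) * (2 * r₁) = ω₂ * r₁ - ω₁ * r₂ := by
      field_simp
      ring
    rcases hdet.lt_or_gt with hd | hd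
    · exact Or.inr ⟨by nlinarith, by nlinarith⟩
    · exact Or.inl ⟨by nlinarith, by nlinarith⟩
  · -- r₁ = 0, r₂ < 0
    refine ⟨(-1 - ω₂) / r₂, Or.inr ⟨?_, ?_⟩⟩
    · rw [hr₁]; linarith
    · rw [div_mul_cancel₀ _ (ne_of_lt hr₂)]; linarith
  · -- r₁ = 0, r₂ = 0 : contradiction
    exfalso; apply hdet; rw [hr₁, hr₂]; ring
  · -- r₁ = 0, r₂ > 0
    refine ⟨(-1 - ω₂) / r₂, Or.inr ⟨?_, ?_⟩⟩
    · rw [hr₁]; linarith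
    · rw [div_mul_cancel₀ _ (ne_of_gt hr₂)]; linarith
  · -- r₁ > 0, r₂ < 0 : mixed signs
    have h₁ : r₁ ≠ 0 := ne_of_gt hr₁
    have h₂ : r₂ ≠ 0 := ne_of_lt hr₂
    refine ⟨-(ω₁ / r₁ + ω₂ / r₂) / 2, ?_⟩
    have ha : (ω₁ + -(ω₁ / r₁ + ω₂ / r₂) / 2 * r₁) * (2 * r₂) = ω₁ * r₂ - ω₂ * r₁ := by
      field_simp
      ring
    have hb : (ω₂ + -(ω₁ / r₁ + ω₂ / r₂) / 2 * r₂) * (2 * r₁) = ω₂ * r₁ - ω₁ * r₂ := by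
      field_simp
      ring
    rcases hdet.lt_or_gt with hd | hd
    · exact Or.inl ⟨by nlinarith, by nlinarith⟩
    · exact Or.inr ⟨by nlinarith, by nlinarith⟩
  · -- r₁ > 0, r₂ = 0
    refine ⟨(1 - ω₁) / r₁, Or.inl ⟨?_, ?_⟩⟩
    · rw [div_mul_cancel₀ _ (ne_of_gt hr₁)]; linarith
    · rw [hr₂]; linarith
  · -- r₁ > 0, r₂ > 0
    refine ⟨max ((1 - ω₁) / r₁) ((1 - ω₂) / r₂), Or.inl ⟨?_, ?_⟩⟩
    · have h := mul_le_mul_of_nonneg_right (le_max_left ((1 - ω₁) / r₁) ((1 - ω₂) / r₂))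
        (le_of_lt hr₁)
      rw [div_mul_cancel₀ _ (ne_of_gt hr₁)] at h
      linarith
    · have h := mul_le_mul_of_nonneg_right (le_max_right ((1 - ω₁) / r₁) ((1 - ω₂) / r₂))
        (le_of_lt hr₂)
      rw [div_mul_cancel₀ _ (ne_of_gt hr₂)] at h
      linarith

/-- Conversely, if both coefficients have the same strict sign for some `l`, the
determinant is nonzero. -/
lemma det_ne_aux (ω₁ ω₂ r₁ r₂ l : ℝ) (hω₁ : ω₁ < 0) (hω₂ : 0 < ω₂)
    (hn : ¬(r₁ = 0 ∧ r₂ = 0))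
    (hab : (0 < ω₁ + l * r₁ ∧ 0 < ω₂ + l * r₂) ∨
      (ω₁ + l * r₁ < 0 ∧ ω₂ + l * r₂ < 0)) :
    ω₁ * r₂ - ω₂ * r₁ ≠ 0 := by
  intro hd
  set a := ω₁ + l * r₁ with ha
  set b := ω₂ + l * r₂ with hb
  have h1 : a * r₂ - b * r₁ = 0 := by rw [ha, hb]; linear_combination hd
  have hrr : r₁ * r₂ * (a * ω₂ - b * ω₁) = 0 := by
    linear_combination (ω₂ * r₁) * h1 - (b * r₁) * hd
  have habne : a * ω₂ - b * ω₁ ≠ 0 := by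
    rcases hab with ⟨h1', h2'⟩ | ⟨h1', h2'⟩
    · nlinarith
    · nlinarith
  have hr : r₁ * r₂ = 0 := by
    rcases mul_eq_zero.mp hrr with h | h
    · exact h
    · exact absurd h habne
  rcases mul_eq_zero.mp hr with h | h
  · -- r₁ = 0 ⇒ ω₁ r₂ = 0 ⇒ r₂ = 0
    have : ω₁ * r₂ = 0 := by rw [h] at hd; linarith
    have hr₂ : r₂ = 0 := by
      rcases mul_eq_zero.mp this with h' | h'
      · exact absurd h' (ne_of_lt hω₁)
      · exact h'
    exact hn ⟨h, hr₂⟩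
  · have : ω₂ * r₁ = 0 := by rw [h] at hd; linarith
    have hr₁ : r₁ = 0 := by
      rcases mul_eq_zero.mp this with h' | h'
      · exact absurd h' (ne_of_gt hω₂)
      · exact h'
    exact hn ⟨hr₁, h⟩

/-- Algebraic core of Proposition 3.3: there exists `l` making the quadratic form
`(w₁, w₂) ↦ (1/2)((ω₁ + l·n₁)‖w₁‖² + (ω₂ + l·n₂)‖w₂‖²)` on `ℝ² × ℝ²` definite
iff `ω₁ n₂ − ω₂ n₁ ≠ 0`. -/
theorem stmt_0 (ω₁ ω₂ : ℝ) (n₁ n₂ : ℤ) (hω₁ : ω₁ < 0) (hω₂ : 0 < ω₂)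
    (hn : ¬(n₁ = 0 ∧ n₂ = 0)) :
    (∃ l : ℝ,
      (∀ w : EuclideanSpace ℝ (Fin 2) × EuclideanSpace ℝ (Fin 2), w ≠ 0 →
        0 < (1/2) * ((ω₁ + l * (n₁ : ℝ)) * ‖w.1‖^2 + (ω₂ + l * (n₂ : ℝ)) * ‖w.2‖^2)) ∨
      (∀ w : EuclideanSpace ℝ (Fin 2) × EuclideanSpace ℝ (Fin 2), w ≠ 0 →
        (1/2) * ((ω₁ + l * (n₁ : ℝ)) * ‖w.1‖^2 + (ω₂ + l * (n₂ : ℝ)) * ‖w.2‖^2) < 0))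
    ↔ ω₁ * (n₂ : ℝ) - ω₂ * (n₁ : ℝ) ≠ 0 := by
  have hn' : ¬((n₁ : ℝ) = 0 ∧ (n₂ : ℝ) = 0) := by
    rintro ⟨h1, h2⟩
    exact hn ⟨by exact_mod_cast h1, by exact_mod_cast h2⟩
  constructor
  · rintro ⟨l, hl⟩
    set e : EuclideanSpace ℝ (Fin 2) := EuclideanSpace.single (0 : Fin 2) (1 : ℝ) with he
    have hne : ‖e‖ = 1 := by rw [he, EuclideanSpace.norm_single]; norm_num
    have he0 : e ≠ 0 := by
      intro h; rw [h, norm_zero] at hne; norm_num at hne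
    have hw1 : ((e, (0 : EuclideanSpace ℝ (Fin 2))) :
        EuclideanSpace ℝ (Fin 2) × EuclideanSpace ℝ (Fin 2)) ≠ 0 := by
      simp [Prod.ext_iff, he0]
    have hw2 : (((0 : EuclideanSpace ℝ (Fin 2)), e) :
        EuclideanSpace ℝ (Fin 2) × EuclideanSpace ℝ (Fin 2)) ≠ 0 := by
      simp [Prod.ext_iff, he0]
    apply det_ne_aux ω₁ ω₂ (n₁ : ℝ) (n₂ : ℝ) l hω₁ hω₂ hn'
    rcases hl with h | h
    · left
      have h1 := h _ hw1
      have h2 := h _ hw2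
      simp only [hne, norm_zero] at h1 h2
      constructor <;> nlinarith
    · right
      have h1 := h _ hw1
      have h2 := h _ hw2
      simp only [hne, norm_zero] at h1 h2
      constructor <;> nlinarith
  · intro hdet
    obtain ⟨l, hl⟩ := exists_l_aux ω₁ ω₂ (n₁ : ℝ) (n₂ : ℝ) hω₁ hω₂ hdet
    refine ⟨l, ?_⟩
    have key : ∀ w : EuclideanSpace ℝ (Fin 2) × EuclideanSpace ℝ (Fin 2), w ≠ 0 →
        0 < ‖w.1‖ ^ 2 ∨ 0 < ‖w.2‖ ^ 2 := by
      intro w hw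
      rcases eq_or_ne w.1 0 with h1 | h1
      · have h2 : w.2 ≠ 0 := by
          intro h2; apply hw; exact Prod.ext h1 h2
        have := norm_pos_iff.mpr h2
        right; positivity
      · have := norm_pos_iff.mpr h1
        left; positivity
    rcases hl with ⟨ha, hb⟩ | ⟨ha, hb⟩
    · left
      intro w hw
      have h1 : 0 ≤ ‖w.1‖ ^ 2 := sq_nonneg _
      have h2 : 0 ≤ ‖w.2‖ ^ 2 := sq_nonneg _
      rcases key w hw with h3 | h3
      · nlinarith [mul_pos ha h3, mul_nonneg hb.le h2]
      · nlinarith [mul_pos hb h3, mul_nonneg ha.le h1]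
    · right
      intro w hw
      have h1 : 0 ≤ ‖w.1‖ ^ 2 := sq_nonneg _
      have h2 : 0 ≤ ‖w.2‖ ^ 2 := sq_nonneg _
      rcases key w hw with h3 | h3
      · nlinarith [mul_neg_of_neg_of_pos ha h3, mul_nonpos_of_nonpos_of_nonneg hb.le h2]
      · nlinarith [mul_neg_of_neg_of_pos hb h3, mul_nonpos_of_nonpos_of_nonneg ha.le h1]
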